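/- Let Φ be an irreducible reduced crystallographic simply-laced root system with base Δ and highest root θ, and let α ∈ Δ be an abelian simple root (c_α(θ) = 1). Then there exists an element w of the subgroup W_{Δ∖{α}} of the Weyl group generated by the simple reflections in the other simple roots such that w² = 1 and w(α) = θ. (Abelian case of the paper's Lemma on the existence of an involution in the Weyl group of the Levi L_α sending α to δ_α.) -/
import Mathlib


open scoped InnerProductSpace

namespace PaperRS

variable {E : Type*} [NormedAddCommGroup E] [InnerProductSpace ℝ E]

/-- A reduced crystallographic simply-laced root system, normalized so that every root has
squared length `2` (hence `⟪δ, ε⟫` is the Cartan integer `⟨δ, ε^∨⟩`). -/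
structure IsRootSystem (Φ : Set E) : Prop where
  finite : Φ.Finite
  nonzero : (0 : E) ∉ Φ
  span_top : Submodule.span ℝ Φ = ⊤
  norm_two : ∀ α ∈ Φ, ⟪α, α⟫_ℝ = 2
  reduced : ∀ α ∈ Φ, ∀ t : ℝ, t • α ∈ Φ → t = 1 ∨ t = -1
  cartan_int : ∀ α ∈ Φ, ∀ β ∈ Φ, ∃ n : ℤ, ⟪α, β⟫_ℝ = (n : ℝ)
  reflect_mem : ∀ α ∈ Φ, ∀ β ∈ Φ, β - ⟪β, α⟫_ℝ • α ∈ Φ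

/-- Irreducibility: `Φ` is nonempty and cannot be split into two mutually orthogonal parts. -/
def IsIrreducible (Φ : Set E) : Prop :=
  Φ.Nonempty ∧ ∀ Φ₁ Φ₂ : Set E, Φ = Φ₁ ∪ Φ₂ →
    (∀ a ∈ Φ₁, ∀ b ∈ Φ₂, ⟪a, b⟫_ℝ = 0) → Φ₁ = ∅ ∨ Φ₂ = ∅

/-- The reflection in (the hyperplane orthogonal to) a root `α` of squared length `2`. -/
def sRefl (α : E) : Function.End E := fun x => x - ⟪x, α⟫_ℝ • α

/-- The group generated by the reflections in the elements of `S`; since every reflection is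
an involution, the submonoid generated by the reflections coincides with the generated group. -/
def genBy (S : Set E) : Submonoid (Function.End E) :=
  Submonoid.closure (sRefl '' S)

/-- The Weyl group of `Φ`: the group generated by the reflections in all the roots. -/
abbrev WeylGroup (Φ : Set E) : Submonoid (Function.End E) := genBy Φ

/-- A base (set of simple roots) of `Φ`, together with the (unique) integer coefficients
`coeff δ γ` of each root `δ` with respect to the simple roots. -/
structure Base (Φ : Set E) where
  Δ : Finset E
  coeff : E → E → ℤ
  subset : ↑Δ ⊆ Φ
  indep : LinearIndependent ℝ (fun γ : {x : E // x ∈ Δ} => (γ : E))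
  expand : ∀ δ ∈ Φ, δ = ∑ γ ∈ Δ, (coeff δ γ : ℝ) • γ
  sign : ∀ δ ∈ Φ, (∀ γ ∈ Δ, 0 ≤ coeff δ γ) ∨ (∀ γ ∈ Δ, coeff δ γ ≤ 0)

variable {Φ : Set E}

/-- `θ` is the highest root of `Φ` with respect to the base `B`. -/
def IsHighest (B : Base Φ) (θ : E) : Prop :=
  θ ∈ Φ ∧ ∀ δ ∈ Φ, ∀ γ ∈ B.Δ, B.coeff δ γ ≤ B.coeff θ γ

/-- `α` is a Heisenberg simple root: the highest root `θ` has `α`-coefficient `2`, and every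
root other than `±θ` has `α`-coefficient in `{-1, 0, 1}`. -/
def IsHeisenberg (B : Base Φ) (θ α : E) : Prop :=
  B.coeff θ α = 2 ∧
    ∀ δ ∈ Φ, δ ≠ θ → δ ≠ -θ →
      B.coeff δ α = -1 ∨ B.coeff δ α = 0 ∨ B.coeff δ α = 1

/-- `α` is an extreme simple root with (unique) neighbour `β`. -/
def IsExtreme (B : Base Φ) (α β : E) : Prop :=
  β ∈ B.Δ ∧ β ≠ α ∧ ⟪α, β⟫_ℝ ≠ 0 ∧
    ∀ γ ∈ B.Δ, γ ≠ α → ⟪α, γ⟫_ℝ ≠ 0 → γ = β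

/-- `Φ_α`: the roots with `α`-coefficient `1` that are orthogonal to `α`. -/
def PhiSet (B : Base Φ) (α : E) : Set E :=
  {ε ∈ Φ | B.coeff ε α = 1 ∧ ⟪ε, α⟫_ℝ = 0}

/-- `Ψ_α`: the roots `ε` with `α`-coefficient `1` and `⟪ε, α⟫ ≤ 0`. -/
def PsiSet (B : Base Φ) (α : E) : Set E :=
  {ε ∈ Φ | B.coeff ε α = 1 ∧ ⟪ε, α⟫_ℝ ≤ 0}


section Aux
open scoped Classical

lemma sRefl_apply (a x : E) : sRefl a x = x - ⟪x, a⟫_ℝ • a := rfl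

lemma sRefl_sq {a : E} (h2 : ⟪a, a⟫_ℝ = 2) : sRefl a * sRefl a = 1 := by
  funext x
  show sRefl a (sRefl a x) = x
  simp only [sRefl, inner_sub_left, real_inner_smul_left, h2]
  module

lemma sRefl_comm {a b : E} (h : ⟪a, b⟫_ℝ = 0) : sRefl a * sRefl b = sRefl b * sRefl a := by
  have h' : ⟪b, a⟫_ℝ = 0 := by rw [real_inner_comm]; exact h
  funext x
  show sRefl a (sRefl b x) = sRefl b (sRefl a x)
  simp only [sRefl, inner_sub_left, inner_sub_right, real_inner_smul_left,
    real_inner_smul_right, h, h']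
  module

lemma sRefl_conj {c b : E} (h2 : ⟪c, c⟫_ℝ = 2) :
    sRefl (sRefl c b) = sRefl c * sRefl b * sRefl c := by
  funext x
  show sRefl (sRefl c b) x = sRefl c (sRefl b (sRefl c x))
  simp only [sRefl, inner_sub_left, inner_sub_right, real_inner_smul_left,
    real_inner_smul_right, h2, real_inner_comm b c]
  module

variable {Φ : Set E}

lemma neg_mem (hΦ : IsRootSystem Φ) {δ : E} (hδ : δ ∈ Φ) : -δ ∈ Φ := by
  have h := hΦ.reflect_mem δ hδ δ hδ
  rw [hΦ.norm_two δ hδ] at h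
  have e : δ - (2:ℝ) • δ = -δ := by module
  rwa [e] at h

lemma inner_int_le_two (hΦ : IsRootSystem Φ) {δ ε : E} (hδ : δ ∈ Φ) (hε : ε ∈ Φ) :
    ∃ n : ℤ, ⟪δ, ε⟫_ℝ = n ∧ -2 ≤ n ∧ n ≤ 2 := by
  obtain ⟨n, hn⟩ := hΦ.cartan_int δ hδ ε hε
  have hsq := real_inner_mul_inner_self_le δ ε
  rw [hn, hΦ.norm_two δ hδ, hΦ.norm_two ε hε] at hsq
  have h4 : n * n ≤ 4 := by exact_mod_cast hsq
  exact ⟨n, hn, by nlinarith, by nlinarith⟩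

lemma eq_of_inner_eq_two (hΦ : IsRootSystem Φ) {δ ε : E} (hδ : δ ∈ Φ) (hε : ε ∈ Φ)
    (h : ⟪δ, ε⟫_ℝ = 2) : δ = ε := by
  have h' : ⟪ε, δ⟫_ℝ = 2 := by rw [real_inner_comm]; exact h
  have hz : ⟪δ - ε, δ - ε⟫_ℝ = 0 := by
    simp only [inner_sub_left, inner_sub_right, hΦ.norm_two δ hδ, hΦ.norm_two ε hε, h, h']
    ring
  exact sub_eq_zero.mp ((inner_self_eq_zero (𝕜 := ℝ)).mp hz)

lemma inner_le_one_of_ne (hΦ : IsRootSystem Φ) {δ ε : E} (hδ : δ ∈ Φ) (hε : ε ∈ Φ)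
    (hne : δ ≠ ε) : ⟪δ, ε⟫_ℝ ≤ 1 := by
  obtain ⟨n, hn, -, h2⟩ := inner_int_le_two hΦ hδ hε
  have h1 : n ≤ 1 := by
    rcases lt_or_eq_of_le h2 with h | h
    · omega
    · exact absurd (eq_of_inner_eq_two hΦ hδ hε (by rw [hn, h]; norm_num)) hne
  rw [hn]; exact_mod_cast h1

lemma sub_mem_of_inner_one (hΦ : IsRootSystem Φ) {δ ε : E} (hδ : δ ∈ Φ) (hε : ε ∈ Φ)
    (h : ⟪δ, ε⟫_ℝ = 1) : δ - ε ∈ Φ := by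
  have h' := hΦ.reflect_mem ε hε δ hδ
  rwa [h, one_smul] at h'

lemma add_mem_of_inner_neg_one (hΦ : IsRootSystem Φ) {δ ε : E} (hδ : δ ∈ Φ) (hε : ε ∈ Φ)
    (h : ⟪δ, ε⟫_ℝ = -1) : δ + ε ∈ Φ := by
  have h' := hΦ.reflect_mem ε hε δ hδ
  rw [h] at h'
  have e : δ - (-1:ℝ) • ε = δ + ε := by module
  rwa [e] at h'

lemma Base.coeff_unique (B : Base Φ) {f g : E → ℝ}
    (h : ∑ γ ∈ B.Δ, f γ • γ = ∑ γ ∈ B.Δ, g γ • γ) : ∀ γ ∈ B.Δ, f γ = g γ := by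
  intro γ hγ
  have h0 : ∑ i ∈ Finset.univ, (fun i : {x : E // x ∈ B.Δ} => f i - g i) i • (i : E) = 0 := by
    have h1 : ∑ i : {x : E // x ∈ B.Δ}, (f (i:E) • (i:E) - g (i:E) • (i:E)) = 0 := by
      rw [Finset.sum_sub_distrib, Finset.sum_coe_sort B.Δ (fun x => f x • x),
        Finset.sum_coe_sort B.Δ (fun x => g x • x), h, sub_self]
    simpa [sub_smul] using h1
  have h2 := linearIndependent_iff'.mp B.indep Finset.univ _ h0 ⟨γ, hγ⟩ (Finset.mem_univ _)
  exact sub_eq_zero.mp h2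

lemma Base.coeff_eq (B : Base Φ) {δ : E} (hδ : δ ∈ Φ) {f : E → ℝ}
    (h : δ = ∑ γ ∈ B.Δ, f γ • γ) : ∀ γ ∈ B.Δ, f γ = (B.coeff δ γ : ℝ) :=
  B.coeff_unique (h.symm.trans (B.expand δ hδ))

lemma Base.coeff_simple (B : Base Φ) {γ₀ : E} (hγ₀ : γ₀ ∈ B.Δ) :
    ∀ γ ∈ B.Δ, B.coeff γ₀ γ = if γ = γ₀ then 1 else 0 := by
  have hexp : γ₀ = ∑ γ ∈ B.Δ, (if γ = γ₀ then (1:ℝ) else 0) • γ := by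
    simp [ite_smul, hγ₀]
  intro γ hγ
  have h := B.coeff_eq (B.subset hγ₀) hexp γ hγ
  by_cases hc : γ = γ₀ <;> simp only [hc, if_true, if_false, reduceIte] at h ⊢ <;>
    exact_mod_cast h.symm

lemma Base.coeff_sub (B : Base Φ) {δ ε : E} (hδ : δ ∈ Φ) (hε : ε ∈ Φ) (hm : δ - ε ∈ Φ) :
    ∀ γ ∈ B.Δ, B.coeff (δ - ε) γ = B.coeff δ γ - B.coeff ε γ := by
  have hexp : δ - ε = ∑ γ ∈ B.Δ, (((B.coeff δ γ : ℝ)) - (B.coeff ε γ : ℝ)) • γ := by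
    conv_lhs => rw [B.expand δ hδ, B.expand ε hε]
    rw [← Finset.sum_sub_distrib]
    simp [sub_smul]
  intro γ hγ
  have h := B.coeff_eq hm hexp γ hγ
  exact_mod_cast h.symm

lemma Base.coeff_add (B : Base Φ) {δ ε : E} (hδ : δ ∈ Φ) (hε : ε ∈ Φ) (hm : δ + ε ∈ Φ) :
    ∀ γ ∈ B.Δ, B.coeff (δ + ε) γ = B.coeff δ γ + B.coeff ε γ := by
  have hexp : δ + ε = ∑ γ ∈ B.Δ, (((B.coeff δ γ : ℝ)) + (B.coeff ε γ : ℝ)) • γ := by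
    conv_lhs => rw [B.expand δ hδ, B.expand ε hε]
    rw [← Finset.sum_add_distrib]
    simp [add_smul]
  intro γ hγ
  have h := B.coeff_eq hm hexp γ hγ
  exact_mod_cast h.symm

lemma Base.coeff_neg (B : Base Φ) (hΦ : IsRootSystem Φ) {δ : E} (hδ : δ ∈ Φ) :
    ∀ γ ∈ B.Δ, B.coeff (-δ) γ = -B.coeff δ γ := by
  have hexp : -δ = ∑ γ ∈ B.Δ, (-(B.coeff δ γ : ℝ)) • γ := by
    conv_lhs => rw [B.expand δ hδ]
    simp [neg_smul]
  intro γ hγ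
  have h := B.coeff_eq (neg_mem hΦ hδ) hexp γ hγ
  exact_mod_cast h.symm

lemma inner_self_expand (hΦ : IsRootSystem Φ) (B : Base Φ) {δ : E} (hδ : δ ∈ Φ) :
    (2:ℝ) = ∑ γ ∈ B.Δ, (B.coeff δ γ : ℝ) * ⟪γ, δ⟫_ℝ := by
  have h := congrArg (fun x => ⟪x, δ⟫_ℝ) (B.expand δ hδ)
  simp only [sum_inner, real_inner_smul_left] at h
  rw [← hΦ.norm_two δ hδ]; exact h

lemma simple_inner_nonpos (hΦ : IsRootSystem Φ) (B : Base Φ) {γ₁ γ₂ : E}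
    (h₁ : γ₁ ∈ B.Δ) (h₂ : γ₂ ∈ B.Δ) (hne : γ₁ ≠ γ₂) : ⟪γ₁, γ₂⟫_ℝ ≤ 0 := by
  obtain ⟨n, hn, -, h2⟩ := inner_int_le_two hΦ (B.subset h₁) (B.subset h₂)
  suffices h : n ≤ 0 by rw [hn]; exact_mod_cast h
  by_contra hcon
  push_neg at hcon
  have hn2 : n = 1 ∨ n = 2 := by omega
  rcases hn2 with h1 | h1
  · have hin : ⟪γ₁, γ₂⟫_ℝ = 1 := by rw [hn, h1]; norm_num
    have hm : γ₁ - γ₂ ∈ Φ := sub_mem_of_inner_one hΦ (B.subset h₁) (B.subset h₂) hin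
    have hc := B.coeff_sub (B.subset h₁) (B.subset h₂) hm
    have hc1 : B.coeff (γ₁ - γ₂) γ₁ = 1 := by
      rw [hc γ₁ h₁, B.coeff_simple h₁ γ₁ h₁, B.coeff_simple h₂ γ₁ h₁]
      simp [hne]
    have hc2 : B.coeff (γ₁ - γ₂) γ₂ = -1 := by
      rw [hc γ₂ h₂, B.coeff_simple h₁ γ₂ h₂, B.coeff_simple h₂ γ₂ h₂]
      simp [Ne.symm hne]
    rcases B.sign (γ₁ - γ₂) hm with hs | hs
    · have := hs γ₂ h₂; omega
    · have := hs γ₁ h₁; omega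
  · exact hne (eq_of_inner_eq_two hΦ (B.subset h₁) (B.subset h₂) (by rw [hn, h1]; norm_num))

end Aux

section Main
open scoped Classical
variable {Φ : Set E}

lemma sRefl_mem_genBy {S : Set E} {a : E} (ha : a ∈ S) : sRefl a ∈ genBy S :=
  Submonoid.subset_closure (Set.mem_image_of_mem _ ha)

lemma mem_diff_simple {B : Base Φ} {γ α : E} (hγ : γ ∈ B.Δ) (hne : γ ≠ α) :
    γ ∈ (↑B.Δ : Set E) \ {α} := ⟨hγ, hne⟩

/-- Roots with `α`-coefficient `1` pairwise have nonnegative inner products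
(the "abelian" property). -/
lemma U_inner_nonneg (hΦ : IsRootSystem Φ) (B : Base Φ) {θ α : E}
    (hθ : IsHighest B θ) (hα : α ∈ B.Δ) (hab : B.coeff θ α = 1)
    {δ ε : E} (hδ : δ ∈ Φ) (hε : ε ∈ Φ)
    (h1 : B.coeff δ α = 1) (h2 : B.coeff ε α = 1) : 0 ≤ ⟪δ, ε⟫_ℝ := by
  by_cases he : δ = ε
  · rw [he, hΦ.norm_two ε hε]; norm_num
  obtain ⟨n, hn, hn2, -⟩ := inner_int_le_two hΦ hδ hε
  rw [hn]
  by_contra hneg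
  push_neg at hneg
  have hnn : n < 0 := by exact_mod_cast hneg
  have : n = -2 ∨ n = -1 := by omega
  rcases this with h | h
  · have hmm : ⟪δ, -ε⟫_ℝ = 2 := by rw [inner_neg_right, hn, h]; norm_num
    have heq : δ = -ε := eq_of_inner_eq_two hΦ hδ (neg_mem hΦ hε) hmm
    have := B.coeff_neg hΦ hε α hα
    rw [← heq] at this
    omega
  · have hin : ⟪δ, ε⟫_ℝ = -1 := by rw [hn, h]; norm_num
    have hm : δ + ε ∈ Φ := add_mem_of_inner_neg_one hΦ hδ hε hin
    have hc := B.coeff_add hδ hε hm α hα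
    have hle := hθ.2 (δ + ε) hm α hα
    omega

/-- The reflection in a root that is a nonnegative combination of the simple roots
other than `α` lies in the submonoid generated by those simple reflections. -/
lemma sRefl_mem_of_pos (hΦ : IsRootSystem Φ) (B : Base Φ) {α : E} (hα : α ∈ B.Δ) :
    ∀ n : ℕ, ∀ β ∈ Φ, (∀ γ ∈ B.Δ, 0 ≤ B.coeff β γ) → B.coeff β α = 0 →
      (∑ γ ∈ B.Δ, B.coeff β γ) ≤ (n : ℤ) → sRefl β ∈ genBy ((↑B.Δ : Set E) \ {α}) := by
  intro n
  induction n with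
  | zero =>
    intro β hβ hpos h0 hsum
    exfalso
    have hall : ∀ γ ∈ B.Δ, B.coeff β γ = 0 := by
      intro γ hγ
      by_contra hne
      have h1 : 1 ≤ B.coeff β γ := by
        have := hpos γ hγ; omega
      have h2 : B.coeff β γ ≤ ∑ γ' ∈ B.Δ, B.coeff β γ' :=
        Finset.single_le_sum (fun γ' hγ' => hpos γ' hγ') hγ
      omega
    have hz : β = 0 := by
      rw [B.expand β hβ]
      apply Finset.sum_eq_zero
      intro γ hγ
      rw [hall γ hγ]; simp
    exact hΦ.nonzero (hz ▸ hβ)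
  | succ n ih =>
    intro β hβ hpos h0 hsum
    have h2 : (2:ℝ) = ∑ γ ∈ B.Δ, (B.coeff β γ : ℝ) * ⟪γ, β⟫_ℝ := inner_self_expand hΦ B hβ
    have hex : ∃ γ ∈ B.Δ, 0 < (B.coeff β γ : ℝ) * ⟪γ, β⟫_ℝ := by
      by_contra hcon
      push_neg at hcon
      have := Finset.sum_nonpos hcon
      linarith
    obtain ⟨γ, hγΔ, hpos'⟩ := hex
    have hγΦ : γ ∈ Φ := B.subset hγΔ
    have hcpos : 0 < B.coeff β γ := by
      by_contra hc
      push_neg at hc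
      have hc0 : B.coeff β γ = 0 := le_antisymm hc (hpos γ hγΔ)
      rw [hc0] at hpos'; simp at hpos'
    have hcR : (0:ℝ) < (B.coeff β γ : ℝ) := by exact_mod_cast hcpos
    have hip : 0 < ⟪γ, β⟫_ℝ := by nlinarith
    have hγα : γ ≠ α := by
      intro h; rw [h, h0] at hcpos; exact lt_irrefl 0 hcpos
    by_cases heq : γ = β
    · rw [← heq]
      exact sRefl_mem_genBy (mem_diff_simple hγΔ hγα)
    · obtain ⟨m, hm, -, hm2⟩ := inner_int_le_two hΦ hγΦ hβ
      have hm1 : 0 < m := by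
        have : (0:ℝ) < (m:ℝ) := hm ▸ hip
        exact_mod_cast this
      have hm2' : m ≠ 2 := fun h =>
        heq (eq_of_inner_eq_two hΦ hγΦ hβ (by rw [hm, h]; norm_num))
      have hmeq : ⟪γ, β⟫_ℝ = 1 := by
        rw [hm]
        have : m = 1 := by omega
        rw [this]; norm_num
      have hβγ1 : ⟪β, γ⟫_ℝ = 1 := by rw [real_inner_comm]; exact hmeq
      have hβ' : β - γ ∈ Φ := sub_mem_of_inner_one hΦ hβ hγΦ hβγ1
      have hco : ∀ γ' ∈ B.Δ, B.coeff (β - γ) γ' =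
          B.coeff β γ' - (if γ' = γ then 1 else 0) := by
        intro γ' hγ'
        rw [B.coeff_sub hβ hγΦ hβ' γ' hγ', B.coeff_simple hγΔ γ' hγ']
      have hpos2 : ∀ γ' ∈ B.Δ, 0 ≤ B.coeff (β - γ) γ' := by
        intro γ' hγ'
        rw [hco γ' hγ']
        by_cases h : γ' = γ
        · simp only [h, if_true]
          have := hpos γ hγΔ
          omega
        · simp only [h, if_false]
          have := hpos γ' hγ'
          omega
      have h0' : B.coeff (β - γ) α = 0 := by
        rw [hco α hα, h0]
        simp [Ne.symm hγα]
      have hsum' : (∑ γ' ∈ B.Δ, B.coeff (β - γ) γ') ≤ (n : ℤ) := by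
        have e : ∑ γ' ∈ B.Δ, B.coeff (β - γ) γ' =
            (∑ γ' ∈ B.Δ, B.coeff β γ') - 1 := by
          rw [Finset.sum_congr rfl hco, Finset.sum_sub_distrib]
          congr 1
          rw [Finset.sum_ite_eq' B.Δ γ (fun _ => (1:ℤ))]
          simp [hγΔ]
        rw [e]
        push_cast at hsum ⊢
        omega
      have hrec := ih (β - γ) hβ' hpos2 h0' hsum'
      have hBeq : sRefl γ (β - γ) = β := by
        rw [sRefl_apply]
        have e : ⟪β - γ, γ⟫_ℝ = -1 := by
          rw [inner_sub_left, hβγ1, hΦ.norm_two γ hγΦ]; norm_num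
        rw [e]; module
      have hconj := sRefl_conj (c := γ) (b := β - γ) (hΦ.norm_two γ hγΦ)
      rw [hBeq] at hconj
      rw [hconj]
      exact mul_mem (mul_mem (sRefl_mem_genBy (mem_diff_simple hγΔ hγα)) hrec)
        (sRefl_mem_genBy (mem_diff_simple hγΔ hγα))

end Main

section Final
open scoped Classical
variable {Φ : Set E}

lemma main_aux (hΦ : IsRootSystem Φ) (B : Base Φ) {θ α : E}
    (hθ : IsHighest B θ) (hα : α ∈ B.Δ) (hab : B.coeff θ α = 1) :
    ∀ n : ℕ, ∀ δ ∈ Φ, B.coeff δ α = 1 → (∑ γ ∈ B.Δ, B.coeff δ γ) ≤ (n : ℤ) →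
      ∃ w ∈ genBy ((↑B.Δ : Set E) \ {α}), w * w = 1 ∧ w α = δ := by
  have hαΦ : α ∈ Φ := B.subset hα
  have hαα : B.coeff α α = 1 := by rw [B.coeff_simple hα α hα]; simp
  intro n
  induction n with
  | zero =>
    intro δ hδ h1 hsum
    exfalso
    have hpc : ∀ γ ∈ B.Δ, 0 ≤ B.coeff δ γ := by
      rcases B.sign δ hδ with hs | hs
      · exact hs
      · have := hs α hα; omega
    have h2 : B.coeff δ α ≤ ∑ γ' ∈ B.Δ, B.coeff δ γ' :=
      Finset.single_le_sum (fun γ' hγ' => hpc γ' hγ') hα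
    omega
  | succ n ih =>
    intro δ hδ h1 hsum
    by_cases hda : δ = α
    · exact ⟨1, one_mem _, one_mul 1, by rw [hda]; rfl⟩
    -- find a simple root γ ≠ α with positive coefficient and ⟪γ, δ⟫ = 1
    have hpc : ∀ γ ∈ B.Δ, 0 ≤ B.coeff δ γ := by
      rcases B.sign δ hδ with hs | hs
      · exact hs
      · have := hs α hα; omega
    have h2 : (2:ℝ) = ∑ γ ∈ B.Δ, (B.coeff δ γ : ℝ) * ⟪γ, δ⟫_ℝ := inner_self_expand hΦ B hδ
    have hαδle : ⟪α, δ⟫_ℝ ≤ 1 := inner_le_one_of_ne hΦ hαΦ hδ (Ne.symm hda)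
    have hsplit := Finset.add_sum_erase B.Δ (fun γ => (B.coeff δ γ : ℝ) * ⟪γ, δ⟫_ℝ) hα
    have hrest : 0 < ∑ γ ∈ B.Δ.erase α, (B.coeff δ γ : ℝ) * ⟪γ, δ⟫_ℝ := by
      have e : (2:ℝ) = (B.coeff δ α : ℝ) * ⟪α, δ⟫_ℝ +
          ∑ γ ∈ B.Δ.erase α, (B.coeff δ γ : ℝ) * ⟪γ, δ⟫_ℝ := by rw [hsplit]; exact h2
      rw [h1] at e
      push_cast at e
      linarith
    have hex : ∃ γ ∈ B.Δ.erase α, (0:ℝ) < (B.coeff δ γ : ℝ) * ⟪γ, δ⟫_ℝ := by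
      apply Finset.exists_lt_of_sum_lt (f := fun _ => (0:ℝ))
      simpa using hrest
    obtain ⟨γ, hγer, hpos'⟩ := hex
    have hγΔ : γ ∈ B.Δ := Finset.mem_of_mem_erase hγer
    have hγα : γ ≠ α := Finset.ne_of_mem_erase hγer
    have hγΦ : γ ∈ Φ := B.subset hγΔ
    have hcpos : 0 < B.coeff δ γ := by
      by_contra hc
      push_neg at hc
      have hc0 : B.coeff δ γ = 0 := le_antisymm hc (hpc γ hγΔ)
      rw [hc0] at hpos'; simp at hpos'
    have hcR : (0:ℝ) < (B.coeff δ γ : ℝ) := by exact_mod_cast hcpos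
    have hip : 0 < ⟪γ, δ⟫_ℝ := by nlinarith
    have hγδne : γ ≠ δ := by
      intro h
      rw [← h] at h1
      rw [B.coeff_simple hγΔ α hα] at h1
      simp [Ne.symm hγα] at h1
    obtain ⟨m, hm, -, hm2⟩ := inner_int_le_two hΦ hγΦ hδ
    have hm1 : 0 < m := by
      have : (0:ℝ) < (m:ℝ) := hm ▸ hip
      exact_mod_cast this
    have hm2' : m ≠ 2 := fun h =>
      hγδne (eq_of_inner_eq_two hΦ hγΦ hδ (by rw [hm, h]; norm_num))
    have hγδ1 : ⟪γ, δ⟫_ℝ = 1 := by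
      rw [hm]
      have : m = 1 := by omega
      rw [this]; norm_num
    have hδγ1 : ⟪δ, γ⟫_ℝ = 1 := by rw [real_inner_comm]; exact hγδ1
    have hδ'Φ : δ - γ ∈ Φ := sub_mem_of_inner_one hΦ hδ hγΦ hδγ1
    have hco : ∀ γ' ∈ B.Δ, B.coeff (δ - γ) γ' =
        B.coeff δ γ' - (if γ' = γ then 1 else 0) := by
      intro γ' hγ'
      rw [B.coeff_sub hδ hγΦ hδ'Φ γ' hγ', B.coeff_simple hγΔ γ' hγ']
    have hδ'α : B.coeff (δ - γ) α = 1 := by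
      rw [hco α hα, h1]; simp [Ne.symm hγα]
    have hδ'pos : ∀ γ' ∈ B.Δ, 0 ≤ B.coeff (δ - γ) γ' := by
      intro γ' hγ'
      rw [hco γ' hγ']
      by_cases h : γ' = γ
      · simp only [h, if_true]; have := hcpos; omega
      · simp only [h, if_false]; have := hpc γ' hγ'; omega
    have hsum' : (∑ γ' ∈ B.Δ, B.coeff (δ - γ) γ') ≤ (n : ℤ) := by
      have e : ∑ γ' ∈ B.Δ, B.coeff (δ - γ) γ' = (∑ γ' ∈ B.Δ, B.coeff δ γ') - 1 := by
        rw [Finset.sum_congr rfl hco, Finset.sum_sub_distrib]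
        congr 1
        rw [Finset.sum_ite_eq' B.Δ γ (fun _ => (1:ℤ))]
        simp [hγΔ]
      rw [e]
      push_cast at hsum ⊢
      omega
    have hd'γ : ⟪δ - γ, γ⟫_ℝ = -1 := by
      rw [inner_sub_left, hδγ1, hΦ.norm_two γ hγΦ]; norm_num
    have hγ2 : ⟪γ, γ⟫_ℝ = 2 := hΦ.norm_two γ hγΦ
    by_cases hag : ⟪α, γ⟫_ℝ = 0
    · -- α ⊥ γ : conjugate the involution for δ - γ by s_γ
      obtain ⟨w', hw'mem, hw'sq, hw'app⟩ := ih (δ - γ) hδ'Φ hδ'α hsum'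
      have hsγ : sRefl γ ∈ genBy ((↑B.Δ : Set E) \ {α}) :=
        sRefl_mem_genBy (mem_diff_simple hγΔ hγα)
      refine ⟨sRefl γ * w' * sRefl γ, mul_mem (mul_mem hsγ hw'mem) hsγ, ?_, ?_⟩
      · have ha2 : sRefl γ * sRefl γ = 1 := sRefl_sq hγ2
        have e1 : (sRefl γ * w' * sRefl γ) * (sRefl γ * w' * sRefl γ) =
            sRefl γ * (w' * ((sRefl γ * sRefl γ) * (w' * sRefl γ))) := by
          simp only [mul_assoc]
        rw [e1, ha2, one_mul, show w' * (w' * sRefl γ) = (w' * w') * sRefl γ from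
          (mul_assoc _ _ _).symm, hw'sq, one_mul, ha2]
      · show sRefl γ (w' (sRefl γ α)) = δ
        have e1 : sRefl γ α = α := by rw [sRefl_apply, hag, zero_smul, sub_zero]
        rw [e1, hw'app, sRefl_apply, hd'γ]
        module
    · -- α and γ are adjacent: ⟪α, γ⟫ = -1
      have hag1 : ⟪α, γ⟫_ℝ = -1 := by
        obtain ⟨k, hk, hk2, -⟩ := inner_int_le_two hΦ hαΦ hγΦ
        have hle : ⟪α, γ⟫_ℝ ≤ 0 := simple_inner_nonpos hΦ B hα hγΔ (Ne.symm hγα)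
        have hkne2 : k ≠ -2 := by
          intro hkk
          have hmm : ⟪α, -γ⟫_ℝ = 2 := by rw [inner_neg_right, hk, hkk]; norm_num
          have heq : α = -γ := eq_of_inner_eq_two hΦ hαΦ (neg_mem hΦ hγΦ) hmm
          have hcn := B.coeff_neg hΦ hγΦ α hα
          rw [← heq] at hcn
          rw [B.coeff_simple hγΔ α hα] at hcn
          simp [Ne.symm hγα] at hcn
          omega
        have hk0 : k ≠ 0 := by
          intro hkk; rw [hk, hkk] at hag; exact hag (by norm_num)
        have hkle : k ≤ 0 := by
          have : (k:ℝ) ≤ 0 := hk ▸ hle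
          exact_mod_cast this
        have : k = -1 := by omega
        rw [hk, this]; norm_num
      by_cases hd'a : δ - γ = α
      · -- δ = α + γ : w = s_γ
        refine ⟨sRefl γ, sRefl_mem_genBy (mem_diff_simple hγΔ hγα), sRefl_sq hγ2, ?_⟩
        show α - ⟪α, γ⟫_ℝ • γ = δ
        rw [hag1]
        have e : δ = α + γ := by rw [← hd'a]; module
        rw [e]; module
      · -- the two-orthogonal-reflections case
        have hγa1 : ⟪γ, α⟫_ℝ = -1 := by rw [real_inner_comm]; exact hag1
        have hδα0 : ⟪δ, α⟫_ℝ = 0 := by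
          have e : ⟪δ - γ, α⟫_ℝ = ⟪δ, α⟫_ℝ + 1 := by
            rw [inner_sub_left, hγa1]; ring
          have hnonneg : 0 ≤ ⟪δ, α⟫_ℝ :=
            U_inner_nonneg hΦ B hθ hα hab hδ hαΦ h1 hαα
          have hle : ⟪δ - γ, α⟫_ℝ ≤ 1 := inner_le_one_of_ne hΦ hδ'Φ hαΦ hd'a
          linarith
        have hδ'α1 : ⟪δ - γ, α⟫_ℝ = 1 := by
          rw [inner_sub_left, hγa1, hδα0]; ring
        have hβ₂Φ : δ - γ - α ∈ Φ := sub_mem_of_inner_one hΦ hδ'Φ hαΦ hδ'α1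
        have hco2 : ∀ γ' ∈ B.Δ, B.coeff (δ - γ - α) γ' =
            B.coeff (δ - γ) γ' - (if γ' = α then 1 else 0) := by
          intro γ' hγ'
          rw [B.coeff_sub hδ'Φ hαΦ hβ₂Φ γ' hγ', B.coeff_simple hα γ' hγ']
        have hpos2 : ∀ γ' ∈ B.Δ, 0 ≤ B.coeff (δ - γ - α) γ' := by
          intro γ' hγ'
          rw [hco2 γ' hγ']
          by_cases h : γ' = α
          · simp [h, hδ'α]
          · simp only [h, if_false]
            have := hδ'pos γ' hγ'
            omega
        have h02 : B.coeff (δ - γ - α) α = 0 := by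
          rw [hco2 α hα, hδ'α]; simp
        have hs2 : sRefl (δ - γ - α) ∈ genBy ((↑B.Δ : Set E) \ {α}) :=
          sRefl_mem_of_pos hΦ B hα (∑ γ' ∈ B.Δ, B.coeff (δ - γ - α) γ').toNat
            (δ - γ - α) hβ₂Φ hpos2 h02 (Int.self_le_toNat _)
        have hsγ : sRefl γ ∈ genBy ((↑B.Δ : Set E) \ {α}) :=
          sRefl_mem_genBy (mem_diff_simple hγΔ hγα)
        have horth : ⟪γ, δ - γ - α⟫_ℝ = 0 := by
          rw [inner_sub_right, inner_sub_right, hγδ1, hγ2, hγa1]; ring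
        refine ⟨sRefl γ * sRefl (δ - γ - α), mul_mem hsγ hs2, ?_, ?_⟩
        · have hcomm := sRefl_comm horth
          have e1 : (sRefl γ * sRefl (δ - γ - α)) * (sRefl γ * sRefl (δ - γ - α)) =
              sRefl γ * ((sRefl (δ - γ - α) * sRefl γ) * sRefl (δ - γ - α)) := by
            simp only [mul_assoc]
          rw [e1, ← hcomm]
          have e2 : sRefl γ * (sRefl γ * sRefl (δ - γ - α) * sRefl (δ - γ - α)) =
              (sRefl γ * sRefl γ) * (sRefl (δ - γ - α) * sRefl (δ - γ - α)) := by
            simp only [mul_assoc]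
          rw [e2, sRefl_sq hγ2, sRefl_sq (hΦ.norm_two _ hβ₂Φ), one_mul]
        · show sRefl γ (sRefl (δ - γ - α) α) = δ
          have hαβ₂ : ⟪α, δ - γ - α⟫_ℝ = -1 := by
            have hcm : ⟪α, δ - γ⟫_ℝ = 1 := by rw [real_inner_comm]; exact hδ'α1
            rw [inner_sub_right, hcm, hΦ.norm_two α hαΦ]; ring
          have e1 : sRefl (δ - γ - α) α = δ - γ := by
            rw [sRefl_apply, hαβ₂]; module
          rw [e1, sRefl_apply, hd'γ]
          module

end Final

/-- For an abelian simple root `α` (i.e. `c_α(θ) = 1`), there is an involution `w` in the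
subgroup of the Weyl group generated by the simple reflections in the simple roots other
than `α` with `w(α) = θ`. -/
theorem exists_involution_conj_alpha_to_highest
    (hΦ : IsRootSystem Φ) (hirr : IsIrreducible Φ) (B : Base Φ)
    {θ α : E} (hθ : IsHighest B θ) (hα : α ∈ B.Δ) (hab : B.coeff θ α = 1) :
    ∃ w ∈ genBy ((↑B.Δ : Set E) \ {α}), w * w = 1 ∧ w α = θ := by
  exact main_aux hΦ B hθ hα hab (∑ γ ∈ B.Δ, B.coeff θ γ).toNat θ hθ.1 hab
    (Int.self_le_toNat _)


end PaperRS
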